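/- Let q₁, q₂ ∈ ℂ* be generic, i.e. q₁^a q₂^b ≠ 1 for all pairs of nonnegative integers (a,b) ≠ (0,0). Then for every n ≥ 1 the shuffle algebra is generated in degree one: every element of S_n, i.e. every quotient f/Δ_n with f a symmetric Laurent polynomial in z₁,…,z_n, is a ℂ-linear combination of iterated shuffle products f₁ * f₂ * ⋯ * f_n with each f_i a one-variable Laurent polynomial. -/

import Mathlib

open MvPolynomial

noncomputable section ShuffleAlgebra

variable (K : Type) [Field K]

/-- The field of rational functions in countably many variables `z 0, z 1, …` over `K`. -/
abbrev RF := FractionRing (MvPolynomial ℕ K)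

/-- The variable `z i` as a rational function. -/
def Z (i : ℕ) : RF K := algebraMap (MvPolynomial ℕ K) (RF K) (X i)

/-- A constant, viewed as a rational function. -/
def cst (q : K) : RF K := algebraMap (MvPolynomial ℕ K) (RF K) (C q)

/-- Substitution `z i ↦ z (f i)` for an injective `f`, as a ring homomorphism of
rational functions. -/
def ren (f : ℕ → ℕ) (hf : Function.Injective f) : RF K →+* RF K :=
  IsFractionRing.lift (g := (algebraMap (MvPolynomial ℕ K) (RF K)).comp (rename f).toRingHom)
    ((IsFractionRing.injective (MvPolynomial ℕ K) (RF K)).comp (rename_injective f hf))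

/-- A permutation of `Fin k` extended (by the identity) to a permutation of `ℕ`. -/
def natPerm (k : ℕ) (σ : Equiv.Perm (Fin k)) : Equiv.Perm ℕ :=
  σ.extendDomain Fin.equivSubtype

/-- `Alt_{S_k}(F) = (1/k!) ∑_{σ ∈ S_k} sgn(σ) F(z_{σ(1)},…,z_{σ(k)})`. -/
def Alt (k : ℕ) (F : RF K) : RF K :=
  (k.factorial : RF K)⁻¹ *
    ∑ σ : Equiv.Perm (Fin k),
      ((Equiv.Perm.sign σ : ℤ) : RF K) * ren K (natPerm k σ) (natPerm k σ).injective F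

variable (q₁ q₂ : K)

/-- `μ(x,y) = (x − q₁y)(x − q₂y)/(x − y)²`. -/
def mu (x y : RF K) : RF K := (x - cst K q₁ * y) * (x - cst K q₂ * y) / (x - y) ^ 2

/-- The shuffle product of `F` (a function of `z 0, …, z (n-1)`) and `G`
(a function of `z 0, …, z (m-1)`). -/
def shuffle (n m : ℕ) (F G : RF K) : RF K :=
  Alt K (n + m) (F * ren K (· + n) (add_left_injective n) G *
    ∏ i : Fin n, ∏ j : Fin m, mu K q₁ q₂ (Z K i.val) (Z K (n + j.val)))

/-- The Vandermonde determinant `Δ_n = ∏_{i<j} (z i − z j)`. -/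
def vand (n : ℕ) : RF K :=
  algebraMap (MvPolynomial ℕ K) (RF K)
    (∏ j ∈ Finset.range n, ∏ i ∈ Finset.range j, (X i - X j))

/-- `f` is a symmetric Laurent polynomial in the variables `z 0, …, z (n-1)`. -/
def IsSymLaurent (n : ℕ) (f : RF K) : Prop :=
  (∃ (p : MvPolynomial ℕ K) (N : ℕ), (↑p.vars : Set ℕ) ⊆ Set.Iio n ∧
      f * algebraMap (MvPolynomial ℕ K) (RF K) ((∏ i ∈ Finset.range n, X i) ^ N)
        = algebraMap (MvPolynomial ℕ K) (RF K) p) ∧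
  ∀ σ : Equiv.Perm (Fin n), ren K (natPerm n σ) (natPerm n σ).injective f = f

/-- The `n`-th graded component `S_n` of the shuffle algebra: quotients `f/Δ_n` with
`f` a symmetric Laurent polynomial in `z 0, …, z (n-1)`. -/
def Sgr (n : ℕ) : Set (RF K) :=
  {F | ∃ f : RF K, IsSymLaurent K n f ∧ F = f / vand K n}

/-- Iterated (left-to-right) shuffle product of a list of elements of `S₁`. -/
def iterSh (l : List (RF K)) : RF K :=
  (l.foldl (fun acc f => (shuffle K q₁ q₂ acc.2 1 acc.1 f, acc.2 + 1)) ((1 : RF K), 0)).1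

/-- The iterated shuffle product `z^{i₁} * ⋯ * z^{i_n}`. -/
def zpows (l : List ℤ) : RF K := iterSh K q₁ q₂ (l.map fun i => Z K 0 ^ i)

/-- `F` is defined at the point `α` and its value there is `v`. -/
def EvalAt (α : ℕ → K) (F : RF K) (v : K) : Prop :=
  ∃ p q : MvPolynomial ℕ K, eval α q ≠ 0 ∧
    F * algebraMap (MvPolynomial ℕ K) (RF K) q = algebraMap (MvPolynomial ℕ K) (RF K) p ∧
    eval α p = v * eval α q

end ShuffleAlgebra
section Aux
open Equiv

variable (K : Type) [Field K]

theorem ren_algebraMap (f : ℕ → ℕ) (hf : Function.Injective f) (p : MvPolynomial ℕ K) :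
    ren K f hf (algebraMap (MvPolynomial ℕ K) (RF K) p)
      = algebraMap (MvPolynomial ℕ K) (RF K) (rename f p) :=
  IsFractionRing.lift_algebraMap _ _

theorem ren_comp_apply (f g : ℕ → ℕ) (hf : Function.Injective f) (hg : Function.Injective g)
    (x : RF K) : ren K f hf (ren K g hg x) = ren K (f ∘ g) (hf.comp hg) x := by
  have : (ren K f hf).comp (ren K g hg) = ren K (f ∘ g) (hf.comp hg) := by
    apply IsLocalization.ringHom_ext (nonZeroDivisors (MvPolynomial ℕ K))
    apply RingHom.ext
    intro p
    simp [ren_algebraMap, MvPolynomial.rename_rename]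
  exact DFunLike.congr_fun this x

theorem ren_congr (f g : ℕ → ℕ) (hf : Function.Injective f) (h : f = g)
    (x : RF K) : ren K f hf (x) = ren K g (h ▸ hf) x := by subst h; rfl

theorem ren_id (hf : Function.Injective (id : ℕ → ℕ)) (x : RF K) : ren K id hf x = x := by
  have : (ren K id hf) = RingHom.id (RF K) := by
    apply IsLocalization.ringHom_ext (nonZeroDivisors (MvPolynomial ℕ K))
    apply RingHom.ext
    intro p
    simp [ren_algebraMap, MvPolynomial.rename_id]
  rw [this]; rfl

theorem ren_Z (f : ℕ → ℕ) (hf : Function.Injective f) (i : ℕ) :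
    ren K f hf (Z K i) = Z K (f i) := by
  rw [Z, ren_algebraMap, MvPolynomial.rename_X]; rfl

theorem ren_cst (f : ℕ → ℕ) (hf : Function.Injective f) (c : K) :
    ren K f hf (cst K c) = cst K c := by
  rw [cst, ren_algebraMap, MvPolynomial.rename_C]

theorem natPerm_mul (k : ℕ) (σ τ : Perm (Fin k)) :
    natPerm k (σ * τ) = natPerm k σ * natPerm k τ :=
  (Equiv.Perm.extendDomain_mul _ σ τ).symm

theorem natPerm_apply_lt (k : ℕ) (σ : Perm (Fin k)) (i : ℕ) (hi : i < k) :
    natPerm k σ i = (σ ⟨i, hi⟩ : Fin k) := by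
  have := Equiv.Perm.extendDomain_apply_subtype (f := (Fin.equivSubtype : Fin k ≃ {i : ℕ // i < k})) σ (b := i) hi
  simpa [natPerm, Fin.equivSubtype] using this

theorem natPerm_apply_ge (k : ℕ) (σ : Perm (Fin k)) (i : ℕ) (hi : k ≤ i) :
    natPerm k σ i = i :=
  Equiv.Perm.extendDomain_apply_not_subtype _ _ (by simp [Nat.not_lt.mpr hi])

end Aux
section Aux2
open Equiv
set_option synthInstance.maxHeartbeats 1000000
set_option maxHeartbeats 1000000

variable (K : Type) [Field K]

/-- Shorthand for the action of a permutation on rational functions. -/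
noncomputable def renP (k : ℕ) (σ : Perm (Fin k)) : RF K →+* RF K :=
  ren K (natPerm k σ) (natPerm k σ).injective

theorem renP_renP (k : ℕ) (σ τ : Perm (Fin k)) (x : RF K) :
    renP K k σ (renP K k τ x) = renP K k (σ * τ) x := by
  unfold renP
  rw [ren_comp_apply]
  exact ren_congr K _ _ _ (by funext i; simp [natPerm_mul, Perm.mul_apply]) x

theorem Alt_def (k : ℕ) (F : RF K) :
    Alt K k F = (k.factorial : RF K)⁻¹ *
      ∑ σ : Perm (Fin k), ((Perm.sign σ : ℤ) : RF K) * renP K k σ F := rfl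

theorem Alt_sum {ι : Type*} (k : ℕ) (s : Finset ι) (f : ι → RF K) :
    Alt K k (∑ i ∈ s, f i) = ∑ i ∈ s, Alt K k (f i) := by
  simp only [Alt_def, map_sum, Finset.mul_sum]
  rw [Finset.sum_comm]

theorem sign_cast_mul_self (k : ℕ) (σ : Perm (Fin k)) :
    ((Perm.sign σ : ℤ) : RF K) * ((Perm.sign σ : ℤ) : RF K) = 1 := by
  rcases Int.units_eq_one_or (Perm.sign σ) with h | h <;> rw [h] <;> norm_num

theorem sign_cast_mul (k : ℕ) (σ τ : Perm (Fin k)) :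
    ((Perm.sign (σ * τ) : ℤ) : RF K)
      = ((Perm.sign σ : ℤ) : RF K) * ((Perm.sign τ : ℤ) : RF K) := by
  rw [map_mul]; push_cast; ring

theorem Alt_mul_left (k : ℕ) (S F : RF K) (hS : ∀ σ : Perm (Fin k), renP K k σ S = S) :
    Alt K k (S * F) = S * Alt K k F := by
  rw [Alt_def, Alt_def, Finset.mul_sum, Finset.mul_sum, Finset.mul_sum]
  refine Finset.sum_congr rfl fun σ _ => ?_
  rw [map_mul, hS]; ring

theorem Alt_renP (k : ℕ) (σ : Perm (Fin k)) (F : RF K) :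
    Alt K k (renP K k σ F) = ((Perm.sign σ : ℤ) : RF K) * Alt K k F := by
  rw [Alt_def, Alt_def, Finset.mul_sum, Finset.mul_sum, Finset.mul_sum]
  refine Fintype.sum_equiv (Equiv.mulRight σ) _ _ fun τ => ?_
  simp only [Equiv.coe_mulRight, renP_renP, sign_cast_mul]
  have h2 := sign_cast_mul_self K k σ
  set a := ((Perm.sign σ : ℤ) : RF K)
  set b := ((Perm.sign τ : ℤ) : RF K)
  set c := ((k.factorial : RF K))⁻¹
  set R := renP K k (τ * σ) F
  linear_combination (-(c * b * R)) * h2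

theorem Alt_antisym [CharZero K] (k : ℕ) (F : RF K)
    (hF : ∀ σ : Perm (Fin k), renP K k σ F = ((Perm.sign σ : ℤ) : RF K) * F) :
    Alt K k F = F := by
  haveI : CharZero (RF K) :=
    charZero_of_injective_algebraMap (IsFractionRing.injective (MvPolynomial ℕ K) (RF K))
  simp only [Alt_def, hF]
  have h1 : ∀ σ : Perm (Fin k), ((Perm.sign σ : ℤ) : RF K) * (((Perm.sign σ : ℤ) : RF K) * F)
      = F := by
    intro σ
    rw [← mul_assoc, sign_cast_mul_self]; ring
  simp only [h1, Finset.sum_const, Finset.card_univ, Fintype.card_perm, Fintype.card_fin, nsmul_eq_mul]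
  rw [← mul_assoc, inv_mul_cancel₀, one_mul]
  exact_mod_cast Nat.cast_ne_zero.mpr (Nat.factorial_ne_zero k)

end Aux2
section Aux3
open Equiv
set_option synthInstance.maxHeartbeats 1000000
set_option maxHeartbeats 1000000

variable (K : Type) [Field K]

theorem exists_extend (n N : ℕ) (h : n ≤ N) (σ : Perm (Fin n)) :
    ∃ τ : Perm (Fin N), natPerm N τ = natPerm n σ ∧ Perm.sign τ = Perm.sign σ := by
  classical
  let e : Fin n ≃ {j : Fin N // (j : ℕ) < n} :=
    { toFun := fun i => ⟨⟨(i : ℕ), lt_of_lt_of_le i.2 h⟩, i.2⟩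
      invFun := fun j => ⟨(j.1 : ℕ), j.2⟩
      left_inv := fun i => rfl
      right_inv := fun j => rfl }
  refine ⟨σ.extendDomain e, ?_, Equiv.Perm.sign_extendDomain σ e⟩
  apply Equiv.ext
  intro i
  by_cases hi : i < n
  · rw [natPerm_apply_lt N _ i (lt_of_lt_of_le hi h), natPerm_apply_lt n σ i hi]
    have hp : ((⟨i, lt_of_lt_of_le hi h⟩ : Fin N) : ℕ) < n := hi
    rw [Equiv.Perm.extendDomain_apply_subtype σ e hp]
    rfl
  · push_neg at hi
    rw [natPerm_apply_ge n σ i hi]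
    by_cases hiN : i < N
    · rw [natPerm_apply_lt N _ i hiN]
      have hp : ¬ ((⟨i, hiN⟩ : Fin N) : ℕ) < n := not_lt.mpr hi
      rw [Equiv.Perm.extendDomain_apply_not_subtype σ e hp]
    · rw [natPerm_apply_ge N _ i (not_lt.mp hiN)]

theorem renP_const (k : ℕ) (σ : Perm (Fin k)) (m : ℕ) (j : ℤ) :
    renP K k σ (((m : RF K))⁻¹ * ((j : ℤ) : RF K)) = ((m : RF K))⁻¹ * ((j : ℤ) : RF K) := by
  rw [map_mul, map_inv₀, map_natCast, map_intCast]

theorem Alt_mul_Alt [CharZero K] (n N : ℕ) (h : n ≤ N) (A G : RF K)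
    (hG : ∀ σ : Perm (Fin n), renP K n σ G = G) :
    Alt K N (Alt K n A * G) = Alt K N (A * G) := by
  haveI : CharZero (RF K) :=
    charZero_of_injective_algebraMap (IsFractionRing.injective (MvPolynomial ℕ K) (RF K))
  have key : ∀ σ : Perm (Fin n),
      Alt K N (renP K n σ A * G) = ((Perm.sign σ : ℤ) : RF K) * Alt K N (A * G) := by
    intro σ
    obtain ⟨τ, hτ, hsign⟩ := exists_extend n N h σ
    have h1 : renP K n σ A * G = renP K N τ (A * G) := by
      rw [map_mul]
      congr 1
      · unfold renP
        exact (ren_congr K _ _ _ (by rw [hτ]) A).symm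
      · rw [show renP K N τ G = renP K n σ G by
          unfold renP; exact ren_congr K _ _ _ (by rw [hτ]) G, hG]
    rw [h1, Alt_renP, hsign]
  rw [Alt_def K n]
  have hexp : ((n.factorial : RF K)⁻¹ * ∑ σ : Perm (Fin n),
      ((Perm.sign σ : ℤ) : RF K) * renP K n σ A) * G = ∑ σ : Perm (Fin n),
      (n.factorial : RF K)⁻¹ * (((Perm.sign σ : ℤ) : RF K) * renP K n σ A * G) := by
    rw [Finset.mul_sum, Finset.sum_mul]
    exact Finset.sum_congr rfl fun σ _ => by ring
  rw [hexp, Alt_sum]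
  have h2 : ∀ σ : Perm (Fin n),
      Alt K N ((n.factorial : RF K)⁻¹ * (((Perm.sign σ : ℤ) : RF K) * renP K n σ A * G))
        = (n.factorial : RF K)⁻¹ * (((Perm.sign σ : ℤ) : RF K) * Alt K N (renP K n σ A * G)) := by
    intro σ
    rw [show ((n.factorial : RF K))⁻¹ * (((Perm.sign σ : ℤ) : RF K) * renP K n σ A * G)
        = (((n.factorial : RF K))⁻¹ * ((Perm.sign σ : ℤ) : RF K)) * (renP K n σ A * G) by ring,
      Alt_mul_left K N _ _ (fun τ => renP_const K N τ n.factorial (Perm.sign σ : ℤ))]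
    ring
  calc ∑ σ : Perm (Fin n),
        Alt K N ((n.factorial : RF K)⁻¹ * (((Perm.sign σ : ℤ) : RF K) * renP K n σ A * G))
      = ∑ σ : Perm (Fin n), (n.factorial : RF K)⁻¹ *
          (((Perm.sign σ : ℤ) : RF K) * (((Perm.sign σ : ℤ) : RF K) * Alt K N (A * G))) := by
        refine Finset.sum_congr rfl fun σ _ => ?_
        rw [h2, key]
    _ = Alt K N (A * G) := by
        have h3 : ∀ σ : Perm (Fin n),
            (n.factorial : RF K)⁻¹ *
              (((Perm.sign σ : ℤ) : RF K) * (((Perm.sign σ : ℤ) : RF K) * Alt K N (A * G)))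
            = (n.factorial : RF K)⁻¹ * Alt K N (A * G) := by
          intro σ
          rw [← mul_assoc ((Perm.sign σ : ℤ) : RF K), sign_cast_mul_self, one_mul]
        simp only [h3, Finset.sum_const, Finset.card_univ, Fintype.card_perm, Fintype.card_fin,
          nsmul_eq_mul]
        rw [← mul_assoc, mul_inv_cancel₀, one_mul]
        exact_mod_cast Nat.cast_ne_zero.mpr (Nat.factorial_ne_zero n)

end Aux3
section Aux4
open Equiv
set_option synthInstance.maxHeartbeats 1000000
set_option maxHeartbeats 1000000

variable (K : Type) [Field K] (q₁ q₂ : K)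

theorem renP_eq_id (k : ℕ) (σ : Perm (Fin k)) (h : natPerm k σ = 1) (x : RF K) :
    renP K k σ x = x := by
  unfold renP
  rw [ren_congr K (⇑(natPerm k σ)) id ((natPerm k σ).injective)
    (by rw [h]; exact Equiv.Perm.coe_one) x, ren_id]

theorem Alt_zero [CharZero K] (x : RF K) : Alt K 0 x = x := by
  apply Alt_antisym
  intro σ
  have h1 : σ = 1 := Subsingleton.elim σ 1
  subst h1
  rw [renP_eq_id K 0 1 (by ext i; exact natPerm_apply_ge 0 1 i (Nat.zero_le i))]
  simp

/-- The product of `μ`-factors over pairs `i < j < m`. -/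
noncomputable def MP (m : ℕ) : RF K :=
  ∏ j ∈ Finset.range m, ∏ i ∈ Finset.range j, mu K q₁ q₂ (Z K i) (Z K j)

/-- The product of shifted one-variable functions. -/
noncomputable def PS (m : ℕ) (v : Fin m → RF K) : RF K :=
  ∏ i : Fin m, ren K (· + (i : ℕ)) (add_left_injective _) (v i)

theorem iterSh_snd (l : List (RF K)) (x : RF K) (k : ℕ) :
    (l.foldl (fun acc f => (shuffle K q₁ q₂ acc.2 1 acc.1 f, acc.2 + 1)) (x, k)).2
      = k + l.length := by
  induction l generalizing x k with
  | nil => simp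
  | cons a l ih => simp [List.foldl_cons, ih]; omega

theorem iterSh_append (l : List (RF K)) (f : RF K) :
    iterSh K q₁ q₂ (l ++ [f]) = shuffle K q₁ q₂ l.length 1 (iterSh K q₁ q₂ l) f := by
  unfold iterSh
  rw [List.foldl_append]
  have h2 := iterSh_snd K q₁ q₂ l 1 0
  rcases hfold : (l.foldl (fun acc f => (shuffle K q₁ q₂ acc.2 1 acc.1 f, acc.2 + 1))
    ((1 : RF K), 0)) with ⟨y, k⟩
  rw [hfold] at h2
  simp at h2
  subst h2
  simp [List.foldl_cons]

theorem ren_mu (f : ℕ → ℕ) (hf : Function.Injective f) (a b : ℕ) :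
    ren K f hf (mu K q₁ q₂ (Z K a) (Z K b)) = mu K q₁ q₂ (Z K (f a)) (Z K (f b)) := by
  unfold mu
  simp only [map_div₀, map_mul, map_sub, map_pow, ren_cst, ren_Z]

theorem renP_shift (m : ℕ) (σ : Perm (Fin m)) (x : RF K) :
    renP K m σ (ren K (· + m) (add_left_injective m) x) = ren K (· + m) (add_left_injective m) x := by
  unfold renP
  rw [ren_comp_apply]
  exact ren_congr K _ _ _ (by
    funext i
    exact natPerm_apply_ge m σ (i + m) (Nat.le_add_left m i)) x

theorem renP_muprod (m : ℕ) (σ : Perm (Fin m)) :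
    renP K m σ (∏ i : Fin m, mu K q₁ q₂ (Z K i) (Z K m))
      = ∏ i : Fin m, mu K q₁ q₂ (Z K i) (Z K m) := by
  rw [map_prod]
  have h1 : ∀ i : Fin m, renP K m σ (mu K q₁ q₂ (Z K i) (Z K m))
      = mu K q₁ q₂ (Z K (σ i)) (Z K m) := by
    intro i
    unfold renP
    rw [ren_mu, natPerm_apply_lt m σ i i.2, natPerm_apply_ge m σ m le_rfl]
  simp only [h1]
  exact Equiv.prod_comp σ (fun i => mu K q₁ q₂ (Z K i) (Z K m))

theorem iterSh_ofFn [CharZero K] (m : ℕ) (v : Fin m → RF K) :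
    iterSh K q₁ q₂ (List.ofFn v) = Alt K m (PS K m v * MP K q₁ q₂ m) := by
  induction m with
  | zero =>
    show iterSh K q₁ q₂ [] = _
    unfold iterSh PS MP
    simp [Alt_zero]
  | succ m ih =>
    rw [List.ofFn_succ', List.concat_eq_append, iterSh_append, List.length_ofFn,
      ih (fun i => v i.castSucc)]
    unfold shuffle
    have hfin1 : ∀ i : Fin m, (∏ j : Fin 1, mu K q₁ q₂ (Z K i.val) (Z K (m + j.val)))
        = mu K q₁ q₂ (Z K i) (Z K m) := by
      intro i
      rw [Fin.prod_univ_one]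
      rfl
    simp only [hfin1]
    have hassoc : Alt K m (PS K m (fun i => v i.castSucc) * MP K q₁ q₂ m) *
          ren K (· + m) (add_left_injective m) (v (Fin.last m)) *
          ∏ i : Fin m, mu K q₁ q₂ (Z K i) (Z K m)
        = Alt K m (PS K m (fun i => v i.castSucc) * MP K q₁ q₂ m) *
          (ren K (· + m) (add_left_injective m) (v (Fin.last m)) *
           ∏ i : Fin m, mu K q₁ q₂ (Z K i) (Z K m)) := by ring
    rw [hassoc]
    rw [Alt_mul_Alt K m (m + 1) (Nat.le_succ m) _ _ (fun σ => by
      rw [map_mul, renP_shift, renP_muprod])]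
    congr 1
    unfold PS MP
    rw [Fin.prod_univ_castSucc, Finset.prod_range_succ,
      ← Fin.prod_univ_eq_prod_range (fun i => mu K q₁ q₂ (Z K i) (Z K m)) m]
    simp only [Fin.coe_castSucc, Fin.val_last]
    ring

end Aux4
section Aux5
open Equiv MvPolynomial
set_option synthInstance.maxHeartbeats 1000000
set_option maxHeartbeats 1000000

variable (K : Type) [Field K] (q₁ q₂ : K)

/-- Transfer a double product over `Fin n` pairs to ranges. -/
theorem prod_pairs_transfer {M : Type*} [CommMonoid M] (n : ℕ) (g : ℕ → ℕ → M) :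
    ∏ j : Fin n, ∏ i ∈ Finset.Iio j, g (i : ℕ) (j : ℕ)
      = ∏ j ∈ Finset.range n, ∏ i ∈ Finset.range j, g i j := by
  rw [← Fin.prod_univ_eq_prod_range (fun j => ∏ i ∈ Finset.range j, g i j) n]
  refine Finset.prod_congr rfl fun j _ => ?_
  refine Finset.prod_bij (fun i _ => (i : ℕ)) ?_ ?_ ?_ ?_
  · intro i hi
    simpa [Finset.mem_range] using (Finset.mem_Iio.mp hi : i < j)
  · intro a ha b hb hab
    exact Fin.val_injective hab
  · intro b hb
    have hbj : b < (j : ℕ) := Finset.mem_range.mp hb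
    exact ⟨⟨b, lt_trans hbj j.2⟩, Finset.mem_Iio.mpr (by simp [Fin.lt_def, hbj]), rfl⟩
  · intro i hi
    rfl

/-- The Vandermonde-type product, at the `Fin n` level. -/
noncomputable def vfin (n : ℕ) : MvPolynomial (Fin n) K :=
  ∏ j : Fin n, ∏ i ∈ Finset.Iio j, (X i - X j)

theorem rename_val_vfin (n : ℕ) :
    rename (Fin.val) (vfin K n) = ∏ j ∈ Finset.range n, ∏ i ∈ Finset.range j,
      (X i - X j : MvPolynomial ℕ K) := by
  unfold vfin
  rw [map_prod]
  rw [← prod_pairs_transfer n (fun i j => (X i - X j : MvPolynomial ℕ K))]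
  refine Finset.prod_congr rfl fun j _ => ?_
  rw [map_prod]
  exact Finset.prod_congr rfl fun i _ => by rw [map_sub, rename_X, rename_X]

theorem vand_eq (n : ℕ) : vand K n
    = algebraMap (MvPolynomial ℕ K) (RF K) (rename (Fin.val) (vfin K n)) := by
  rw [vand, rename_val_vfin]

theorem rename_vfin_sign (n : ℕ) (σ : Perm (Fin n)) :
    rename σ (vfin K n) = ((Perm.sign σ : ℤ) : MvPolynomial (Fin n) K) * vfin K n := by
  classical
  -- relate vfin to the vandermonde determinant
  set D : MvPolynomial (Fin n) K := (Matrix.vandermonde (fun i : Fin n => X i)).det with hD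
  set u : MvPolynomial (Fin n) K := ∏ j : Fin n, (-1 : MvPolynomial (Fin n) K) ^ (Finset.Iio j).card with hu
  have huu : u * u = 1 := by
    rw [hu, ← Finset.prod_mul_distrib]
    rw [show (1 : MvPolynomial (Fin n) K) = ∏ _j : Fin n, 1 from (Finset.prod_const_one).symm]
    refine Finset.prod_congr rfl fun j _ => ?_
    rw [← pow_add, ← two_mul, pow_mul]
    norm_num
  have hDv : D = u * vfin K n := by
    rw [hD, Matrix.det_vandermonde]
    rw [Finset.prod_comm' (t' := Finset.univ) (s' := fun j => Finset.Iio j)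
      (by intro x y; simp [Finset.mem_Ioi, Finset.mem_Iio, and_comm])]
    rw [hu]
    unfold vfin
    rw [← Finset.prod_mul_distrib]
    refine Finset.prod_congr rfl fun j _ => ?_
    rw [← Finset.prod_const (b := (-1 : MvPolynomial (Fin n) K)), ← Finset.prod_mul_distrib]
    exact Finset.prod_congr rfl fun i _ => by ring
  have hrenD : rename σ D = ((Perm.sign σ : ℤ) : MvPolynomial (Fin n) K) * D := by
    have h0 : rename (R := K) ⇑σ D = ((Matrix.vandermonde fun i : Fin n =>
        (X i : MvPolynomial (Fin n) K)).map ⇑(rename (R := K) ⇑σ)).det :=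
      RingHom.map_det (rename (R := K) ⇑σ).toRingHom
        (Matrix.vandermonde fun i : Fin n => (X i : MvPolynomial (Fin n) K))
    rw [hD] at h0 ⊢
    rw [h0]
    have hmat : (Matrix.vandermonde (fun i : Fin n => (X i : MvPolynomial (Fin n) K))).map
        (rename σ) = (Matrix.vandermonde (fun i : Fin n => (X i : MvPolynomial (Fin n) K))).submatrix σ id := by
      ext i j
      simp [Matrix.vandermonde, rename_X]
    rw [hmat, Matrix.det_permute]
  have hrenu : rename σ u = u := by
    rw [hu, map_prod]
    simp only [map_pow, map_neg, map_one]
  have h1 : u * rename σ (vfin K n) = u * (((Perm.sign σ : ℤ) : MvPolynomial (Fin n) K) * vfin K n) := by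
    calc u * rename σ (vfin K n) = rename σ (u * vfin K n) := by rw [map_mul, hrenu]
    _ = rename σ D := by rw [hDv]
    _ = ((Perm.sign σ : ℤ) : MvPolynomial (Fin n) K) * D := hrenD
    _ = u * (((Perm.sign σ : ℤ) : MvPolynomial (Fin n) K) * vfin K n) := by rw [hDv]; ring
  have := congrArg (fun x => u * x) h1
  simpa [← mul_assoc, huu] using this

end Aux5
section Aux5b
open Equiv MvPolynomial
set_option synthInstance.maxHeartbeats 1000000
set_option maxHeartbeats 1000000

variable (K : Type) [Field K] (q₁ q₂ : K)

theorem natPerm_comp_val (n : ℕ) (σ : Perm (Fin n)) :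
    (natPerm n σ : ℕ → ℕ) ∘ (Fin.val : Fin n → ℕ) = Fin.val ∘ σ := by
  funext i
  exact natPerm_apply_lt n σ i i.2

theorem renP_vand (n : ℕ) (σ : Perm (Fin n)) :
    renP K n σ (vand K n) = ((Perm.sign σ : ℤ) : RF K) * vand K n := by
  unfold renP
  rw [vand_eq, ren_algebraMap]
  rw [show rename (⇑(natPerm n σ)) (rename Fin.val (vfin K n))
      = rename Fin.val (rename σ (vfin K n)) by
    rw [rename_rename, rename_rename, natPerm_comp_val]]
  rw [rename_vfin_sign, map_mul, map_mul, map_intCast, map_intCast]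

theorem vand_ne_zero (n : ℕ) : vand K n ≠ 0 := by
  rw [vand]
  rw [Ne, IsFractionRing.to_map_eq_zero_iff]
  apply Finset.prod_ne_zero_iff.mpr
  intro j hj
  apply Finset.prod_ne_zero_iff.mpr
  intro i hi
  have hij : i ≠ j := Nat.ne_of_lt (Finset.mem_range.mp hi)
  exact sub_ne_zero.mpr (fun h => hij (MvPolynomial.X_injective h))

theorem renP_vand_sq (n : ℕ) (σ : Perm (Fin n)) :
    renP K n σ ((vand K n) ^ 2) = (vand K n) ^ 2 := by
  rw [map_pow, renP_vand, mul_pow]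
  rw [show ((Perm.sign σ : ℤ) : RF K) ^ 2 = 1 by
    rw [sq]; exact sign_cast_mul_self K n σ]
  ring

theorem renP_vand_sq_inv (n : ℕ) (σ : Perm (Fin n)) :
    renP K n σ (((vand K n) ^ 2)⁻¹) = ((vand K n) ^ 2)⁻¹ := by
  rw [map_inv₀, renP_vand_sq]

/-- The numerator polynomial `∏_{i<j} (z_i - q₁ z_j)(z_i - q₂ z_j)`, over `ℕ`. -/
noncomputable def Knat (n : ℕ) : MvPolynomial ℕ K :=
  ∏ j ∈ Finset.range n, ∏ i ∈ Finset.range j,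
    ((X i - C q₁ * X j) * (X i - C q₂ * X j))

/-- The numerator polynomial, over `Fin n`. -/
noncomputable def Kfin (n : ℕ) : MvPolynomial (Fin n) K :=
  ∏ j : Fin n, ∏ i ∈ Finset.Iio j, ((X i - C q₁ * X j) * (X i - C q₂ * X j))

theorem rename_val_Kfin (n : ℕ) :
    rename (Fin.val) (Kfin K q₁ q₂ n) = Knat K q₁ q₂ n := by
  unfold Kfin Knat
  rw [map_prod]
  rw [← prod_pairs_transfer n (fun i j =>
    ((X i - C q₁ * X j) * (X i - C q₂ * X j) : MvPolynomial ℕ K))]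
  refine Finset.prod_congr rfl fun j _ => ?_
  rw [map_prod]
  refine Finset.prod_congr rfl fun i _ => ?_
  simp only [map_mul, map_sub, rename_X, rename_C]

theorem MP_eq (n : ℕ) :
    MP K q₁ q₂ n = algebraMap (MvPolynomial ℕ K) (RF K) (Knat K q₁ q₂ n) / (vand K n) ^ 2 := by
  unfold MP Knat
  rw [vand]
  simp only [map_prod]
  rw [← Finset.prod_pow, ← Finset.prod_div_distrib]
  refine Finset.prod_congr rfl fun j _ => ?_
  rw [← Finset.prod_pow, ← Finset.prod_div_distrib]
  refine Finset.prod_congr rfl fun i _ => ?_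
  unfold mu
  simp only [map_mul, map_sub]
  rfl

end Aux5b
section Aux6
open Equiv MvPolynomial
set_option synthInstance.maxHeartbeats 1000000
set_option maxHeartbeats 1000000

variable (q₁ q₂ : ℂ)

/-- `x` is obtained from `y` by multiplying by a nontrivial monomial in `q₁, q₂`. -/
def relQ (x y : ℂ) : Prop := ∃ a b : ℕ, (a, b) ≠ ((0 : ℕ), (0 : ℕ)) ∧ x = q₁ ^ a * q₂ ^ b * y

theorem relQ_trans {x y z : ℂ} (h1 : relQ q₁ q₂ x y) (h2 : relQ q₁ q₂ y z) :
    relQ q₁ q₂ x z := by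
  obtain ⟨a, b, hab, h1⟩ := h1
  obtain ⟨a', b', hab', h2⟩ := h2
  refine ⟨a + a', b + b', ?_, by rw [h1, h2]; ring⟩
  intro h
  rw [Prod.mk.injEq] at h
  apply hab'
  rw [Prod.mk.injEq]
  exact ⟨by omega, by omega⟩

theorem relQ_irrefl (hgen : ∀ a b : ℕ, (a, b) ≠ (0, 0) → q₁ ^ a * q₂ ^ b ≠ 1)
    {x : ℂ} (hx : x ≠ 0) : ¬ relQ q₁ q₂ x x := by
  rintro ⟨a, b, hab, h⟩
  have h' : q₁ ^ a * q₂ ^ b * x = 1 * x := by rw [one_mul]; exact h.symm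
  exact hgen a b hab (mul_right_cancel₀ hx h')

theorem exists_minimal {ι : Type*} [DecidableEq ι]
    (hgen : ∀ a b : ℕ, (a, b) ≠ (0, 0) → q₁ ^ a * q₂ ^ b ≠ 1)
    (s : Finset ι) (v : ι → ℂ) (hv : ∀ i ∈ s, v i ≠ 0) (hs : s.Nonempty) :
    ∃ m ∈ s, ∀ y ∈ s, ¬ relQ q₁ q₂ (v m) (v y) := by
  classical
  induction s using Finset.induction_on with
  | empty => exact absurd hs (by simp)
  | @insert a t ha ih =>
    by_cases ht : t.Nonempty
    · obtain ⟨m, hm, hmin⟩ := ih (fun i hi => hv i (Finset.mem_insert_of_mem hi)) ht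
      by_cases h : relQ q₁ q₂ (v m) (v a)
      · refine ⟨a, Finset.mem_insert_self a t, ?_⟩
        intro y hy
        rcases Finset.mem_insert.mp hy with rfl | hy
        · exact relQ_irrefl q₁ q₂ hgen (hv y (Finset.mem_insert_self y t))
        · intro hr
          exact hmin y hy (relQ_trans q₁ q₂ h hr)
      · refine ⟨m, Finset.mem_insert_of_mem hm, ?_⟩
        intro y hy
        rcases Finset.mem_insert.mp hy with rfl | hy
        · exact h
        · exact hmin y hy
    · have ht' : t = ∅ := Finset.not_nonempty_iff_eq_empty.mp ht
      subst ht'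
      refine ⟨a, Finset.mem_insert_self a ∅, ?_⟩
      intro y hy
      rcases Finset.mem_insert.mp hy with rfl | hy
      · exact relQ_irrefl q₁ q₂ hgen (hv y (Finset.mem_insert_self y ∅))
      · exact absurd hy (by simp)

theorem exists_sorted_list {ι : Type*} [DecidableEq ι]
    (hgen : ∀ a b : ℕ, (a, b) ≠ (0, 0) → q₁ ^ a * q₂ ^ b ≠ 1)
    (k : ℕ) (s : Finset ι) (v : ι → ℂ) (hcard : s.card = k) (hv : ∀ i ∈ s, v i ≠ 0) :
    ∃ l : List ι, l.Nodup ∧ l.toFinset = s ∧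
      List.Pairwise (fun i j => ¬ relQ q₁ q₂ (v i) (v j)) l := by
  classical
  induction k generalizing s with
  | zero =>
    refine ⟨[], by simp, ?_, by simp⟩
    simp [Finset.card_eq_zero.mp hcard]
  | succ k ih =>
    have hne : s.Nonempty := Finset.card_pos.mp (by omega)
    obtain ⟨m, hm, hmin⟩ := exists_minimal q₁ q₂ hgen s v hv hne
    have hcard' : (s.erase m).card = k := by
      rw [Finset.card_erase_of_mem hm, hcard]
      omega
    obtain ⟨l', hnd, htf, hpw⟩ := ih (s.erase m) hcard'
      (fun i hi => hv i (Finset.mem_of_mem_erase hi))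
    refine ⟨m :: l', ?_, ?_, ?_⟩
    · refine List.nodup_cons.mpr ⟨?_, hnd⟩
      intro hmem
      have : m ∈ s.erase m := htf ▸ List.mem_toFinset.mpr hmem
      exact (Finset.notMem_erase m s) this
    · rw [List.toFinset_cons, htf, Finset.insert_erase hm]
    · refine List.pairwise_cons.mpr ⟨?_, hpw⟩
      intro j hj
      exact hmin j (Finset.mem_of_mem_erase (htf ▸ List.mem_toFinset.mpr hj))

theorem exists_sorted_perm (hgen : ∀ a b : ℕ, (a, b) ≠ (0, 0) → q₁ ^ a * q₂ ^ b ≠ 1)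
    (n : ℕ) (v : Fin n → ℂ) (hv : ∀ i, v i ≠ 0) :
    ∃ σ : Perm (Fin n), ∀ i j : Fin n, i < j → ¬ relQ q₁ q₂ (v (σ i)) (v (σ j)) := by
  classical
  obtain ⟨l, hnd, htf, hpw⟩ := exists_sorted_list q₁ q₂ hgen n Finset.univ v
    (by simp) (fun i _ => hv i)
  have hlen : l.length = n := by
    have h1 : l.toFinset.card = l.length := List.toFinset_card_of_nodup hnd
    rw [htf] at h1
    simpa using h1.symm
  have hinj : Function.Injective (fun i : Fin n => l.get (Fin.cast hlen.symm i)) := by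
    intro i j hij
    have := (List.nodup_iff_injective_get).mp hnd hij
    exact Fin.cast_injective _ this
  obtain ⟨σ, hσ⟩ : ∃ σ : Perm (Fin n), ∀ i, σ i = l.get (Fin.cast hlen.symm i) := by
    refine ⟨Equiv.ofBijective _ ((Finite.injective_iff_bijective).mp hinj), fun i => rfl⟩
  refine ⟨σ, fun i j hij => ?_⟩
  rw [hσ, hσ]
  exact (List.pairwise_iff_get.mp hpw) _ _ (by simpa using hij)

theorem key_ideal (hq₁ : q₁ ≠ 0) (hq₂ : q₂ ≠ 0)
    (hgen : ∀ a b : ℕ, (a, b) ≠ (0, 0) → q₁ ^ a * q₂ ^ b ≠ 1) (n : ℕ) :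
    ∃ (N : ℕ) (c : Perm (Fin n) → MvPolynomial (Fin n) ℂ),
      (∏ i : Fin n, X i) ^ N = ∑ σ : Perm (Fin n), c σ * rename σ (Kfin ℂ q₁ q₂ n) := by
  classical
  set I : Ideal (MvPolynomial (Fin n) ℂ) :=
    Ideal.span (Set.range fun σ : Perm (Fin n) => rename σ (Kfin ℂ q₁ q₂ n)) with hI
  have h1 : (∏ i : Fin n, X i) ∈ vanishingIdeal ℂ (zeroLocus ℂ I) := by
    rw [mem_vanishingIdeal_iff]
    intro ξ hξ
    change eval ξ _ = 0
    rw [map_prod]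
    by_contra hprod
    have hv : ∀ i, ξ i ≠ 0 := by
      intro i hi
      exact hprod (Finset.prod_eq_zero (Finset.mem_univ i) (by rw [eval_X, hi]))
    obtain ⟨σ, hσ⟩ := exists_sorted_perm q₁ q₂ hgen n ξ hv
    have hmem : rename σ (Kfin ℂ q₁ q₂ n) ∈ I := by
      rw [hI]
      exact Ideal.subset_span (Set.mem_range_self σ)
    have hzero := (mem_zeroLocus_iff.mp hξ) _ hmem
    replace hzero : eval ξ (rename σ (Kfin ℂ q₁ q₂ n)) = 0 := hzero
    rw [eval_rename] at hzero
    unfold Kfin at hzero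
    rw [map_prod] at hzero
    obtain ⟨j, _, hj⟩ := Finset.prod_eq_zero_iff.mp hzero
    rw [map_prod] at hj
    obtain ⟨i, hij, hi⟩ := Finset.prod_eq_zero_iff.mp hj
    have hij' : i < j := Finset.mem_Iio.mp hij
    simp only [map_mul, map_sub, eval_X, eval_C, Function.comp_apply] at hi
    rcases mul_eq_zero.mp hi with h | h
    · exact hσ i j hij' ⟨1, 0, by simp, by rw [sub_eq_zero] at h; simpa using h⟩
    · exact hσ i j hij' ⟨0, 1, by simp, by rw [sub_eq_zero] at h; simpa using h⟩
  rw [vanishingIdeal_zeroLocus_eq_radical] at h1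
  obtain ⟨N, hN⟩ := h1
  obtain ⟨c, hc⟩ := Ideal.mem_span_range_iff_exists_fun.mp hN
  exact ⟨N, c, hc.symm⟩

end Aux6
section Aux7a
open Equiv MvPolynomial
set_option synthInstance.maxHeartbeats 1000000
set_option maxHeartbeats 1000000

variable (q₁ q₂ : ℂ)

theorem Z_ne_zero (i : ℕ) : Z ℂ i ≠ 0 := by
  rw [Z, Ne, IsFractionRing.to_map_eq_zero_iff]
  exact MvPolynomial.X_ne_zero i

theorem cst_sum {ι : Type*} (s : Finset ι) (g : ι → ℂ) :
    cst ℂ (∑ x ∈ s, g x) = ∑ x ∈ s, cst ℂ (g x) := by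
  unfold cst
  rw [map_sum, map_sum]

theorem intCast_eq_cst (m : ℤ) : ((m : ℤ) : RF ℂ) = cst ℂ (m : ℂ) := by
  unfold cst
  rw [show ((m : ℂ) : ℂ) = ((m : ℤ) : ℂ) from rfl]
  rw [map_intCast, map_intCast]

theorem cst_mul (a b : ℂ) : cst ℂ (a * b) = cst ℂ a * cst ℂ b := by
  unfold cst; rw [map_mul, map_mul]

/-- `Z 0 ^ e` is a symmetric Laurent polynomial in one variable. -/
theorem isSymLaurent_zpow (e : ℤ) : IsSymLaurent ℂ 1 (Z ℂ 0 ^ e) := by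
  constructor
  · refine ⟨X 0 ^ (e + e.natAbs).toNat, e.natAbs, ?_, ?_⟩
    · refine subset_trans (Finset.coe_subset.mpr (vars_pow _ _)) ?_
      rw [vars_X]
      intro x hx
      simp at hx
      simp [hx]
    · rw [Finset.prod_range_one, map_pow, map_pow]
      rw [show algebraMap (MvPolynomial ℕ ℂ) (RF ℂ) (X 0) = Z ℂ 0 from rfl]
      rw [show (Z ℂ 0 ^ e.natAbs : RF ℂ) = Z ℂ 0 ^ ((e.natAbs : ℤ)) from (zpow_natCast _ _).symm,
        show (Z ℂ 0 ^ (e + e.natAbs).toNat : RF ℂ) = Z ℂ 0 ^ (((e + e.natAbs).toNat : ℤ)) from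
          (zpow_natCast _ _).symm]
      rw [← zpow_add₀ (Z_ne_zero 0)]
      congr 1
      have : (0 : ℤ) ≤ e + e.natAbs := by
        rcases Int.natAbs_eq e with h | h <;> omega
      omega
  · intro σ
    have hσ : σ = 1 := Subsingleton.elim σ 1
    subst hσ
    have h1 : natPerm 1 (1 : Perm (Fin 1)) = 1 := by
      ext i
      by_cases hi : i < 1
      · rw [natPerm_apply_lt 1 1 i hi]
        interval_cases i
        simp
      · exact natPerm_apply_ge 1 1 i (by omega)
    exact renP_eq_id ℂ 1 1 h1 _

theorem ZP_eq (n : ℕ) : algebraMap (MvPolynomial ℕ ℂ) (RF ℂ) (∏ i ∈ Finset.range n, X i)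
    = ∏ i : Fin n, Z ℂ (i : ℕ) := by
  rw [map_prod]
  exact (Fin.prod_univ_eq_prod_range (fun i => Z ℂ i) n).symm

theorem renP_ZP (n : ℕ) (τ : Perm (Fin n)) :
    renP ℂ n τ (∏ i : Fin n, Z ℂ (i : ℕ)) = ∏ i : Fin n, Z ℂ (i : ℕ) := by
  rw [map_prod]
  have h1 : ∀ i : Fin n, renP ℂ n τ (Z ℂ (i : ℕ)) = Z ℂ ((τ i : Fin n) : ℕ) := by
    intro i
    unfold renP
    rw [ren_Z, natPerm_apply_lt n τ i i.2]
  simp only [h1]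
  exact Equiv.prod_comp τ (fun i => Z ℂ ((i : Fin n) : ℕ))

theorem renP_ZPpow_inv (n M : ℕ) (τ : Perm (Fin n)) :
    renP ℂ n τ (((∏ i : Fin n, Z ℂ (i : ℕ)) ^ M)⁻¹) = ((∏ i : Fin n, Z ℂ (i : ℕ)) ^ M)⁻¹ := by
  rw [map_inv₀, map_pow, renP_ZP]

theorem absorb (n M : ℕ) (d : Fin n → ℕ) :
    (((∏ i : Fin n, Z ℂ (i : ℕ)) ^ M)⁻¹ : RF ℂ) * ∏ i : Fin n, Z ℂ (i : ℕ) ^ (d i)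
      = ∏ i : Fin n, Z ℂ (i : ℕ) ^ ((d i : ℤ) - M) := by
  rw [← Finset.prod_pow, ← Finset.prod_inv_distrib, ← Finset.prod_mul_distrib]
  refine Finset.prod_congr rfl fun i _ => ?_
  rw [show ((Z ℂ (i:ℕ) ^ M)⁻¹ : RF ℂ) = Z ℂ (i:ℕ) ^ (-(M:ℤ)) by
    rw [zpow_neg, zpow_natCast],
    show (Z ℂ (i:ℕ) ^ (d i) : RF ℂ) = Z ℂ (i:ℕ) ^ ((d i : ℤ)) from (zpow_natCast _ _).symm,
    ← zpow_add₀ (Z_ne_zero (i:ℕ))]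
  congr 1
  omega

theorem iterSh_zpowList (n : ℕ) (e : Fin n → ℤ) :
    iterSh ℂ q₁ q₂ (List.ofFn fun i => Z ℂ 0 ^ e i)
      = ((vand ℂ n) ^ 2)⁻¹ * Alt ℂ n ((∏ i : Fin n, Z ℂ (i : ℕ) ^ e i) *
          algebraMap (MvPolynomial ℕ ℂ) (RF ℂ) (Knat ℂ q₁ q₂ n)) := by
  rw [iterSh_ofFn]
  have hPS : PS ℂ n (fun i => Z ℂ 0 ^ e i) = ∏ i : Fin n, Z ℂ (i : ℕ) ^ e i := by
    unfold PS
    refine Finset.prod_congr rfl fun i _ => ?_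
    rw [map_zpow₀, ren_Z]
    norm_num
  rw [hPS, MP_eq]
  have harg : (∏ i : Fin n, Z ℂ (i : ℕ) ^ e i) *
      (algebraMap (MvPolynomial ℕ ℂ) (RF ℂ) (Knat ℂ q₁ q₂ n) / (vand ℂ n) ^ 2)
      = ((vand ℂ n) ^ 2)⁻¹ * ((∏ i : Fin n, Z ℂ (i : ℕ) ^ e i) *
        algebraMap (MvPolynomial ℕ ℂ) (RF ℂ) (Knat ℂ q₁ q₂ n)) := by
    rw [div_eq_mul_inv]
    ring
  rw [harg]
  exact Alt_mul_left ℂ n _ _ (renP_vand_sq_inv ℂ n)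

end Aux7a
section Aux7b
open Equiv MvPolynomial
set_option synthInstance.maxHeartbeats 1000000
set_option maxHeartbeats 4000000

variable (q₁ q₂ : ℂ)

theorem A_rename_perm (n : ℕ) (σ : Perm (Fin n)) (p : MvPolynomial (Fin n) ℂ) :
    algebraMap (MvPolynomial ℕ ℂ) (RF ℂ) (rename Fin.val (rename σ p))
      = renP ℂ n σ (algebraMap (MvPolynomial ℕ ℂ) (RF ℂ) (rename Fin.val p)) := by
  unfold renP
  rw [ren_algebraMap, rename_rename, rename_rename, natPerm_comp_val]

theorem main_span (hq₁ : q₁ ≠ 0) (hq₂ : q₂ ≠ 0)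
    (hgen : ∀ a b : ℕ, (a, b) ≠ (0, 0) → q₁ ^ a * q₂ ^ b ≠ 1)
    (n : ℕ) (F : RF ℂ) (hF : F ∈ Sgr ℂ n) :
    ∃ (s : Finset ((_ : Perm (Fin n)) × (Fin n →₀ ℕ))) (γ : ((_ : Perm (Fin n)) × (Fin n →₀ ℕ)) → ℂ)
      (M : ℕ),
      F = ∑ x ∈ s, cst ℂ (γ x) *
        iterSh ℂ q₁ q₂ (List.ofFn fun i => Z ℂ 0 ^ ((x.2 i : ℤ) - M)) := by
  classical
  obtain ⟨f, hsl, hFe⟩ := hF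
  obtain ⟨⟨p₀, N₁, hvars, hfp⟩, hsym⟩ := hsl
  set A := algebraMap (MvPolynomial ℕ ℂ) (RF ℂ) with hA
  -- pull p₀ back to Fin n variables
  obtain ⟨p₁, hp₁⟩ := exists_rename_eq_of_vars_subset_range p₀ (Fin.val : Fin n → ℕ)
    Fin.val_injective (by
      intro x hx
      have hxn := hvars hx
      exact ⟨⟨x, hxn⟩, rfl⟩)
  obtain ⟨N, c, hNc⟩ := key_ideal q₁ q₂ hq₁ hq₂ hgen n
  set M := N + N₁ with hM
  set ZPF : RF ℂ := ∏ i : Fin n, Z ℂ (i : ℕ) with hZPF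
  have hZPne : ZPF ≠ 0 := Finset.prod_ne_zero_iff.mpr (fun i _ => Z_ne_zero _)
  set KR : RF ℂ := A (Knat ℂ q₁ q₂ n) with hKR
  set W : RF ℂ := f * vand ℂ n with hW
  set g : Perm (Fin n) → MvPolynomial (Fin n) ℂ :=
    fun σ => rename ⇑(σ⁻¹) (c σ * p₁ * vfin ℂ n) with hg
  set G : Perm (Fin n) → RF ℂ := fun σ => A (rename Fin.val (g σ)) with hG
  -- Step A : image of the Nullstellensatz identity
  have hZPN : ZPF ^ N = ∑ σ : Perm (Fin n), A (rename Fin.val (c σ)) * renP ℂ n σ KR := by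
    have h0 := congrArg (fun p => A (rename (Fin.val : Fin n → ℕ) p)) hNc
    simp only [map_pow, map_sum, map_mul] at h0
    rw [show A (rename Fin.val (∏ i : Fin n, (X i : MvPolynomial (Fin n) ℂ))) = ZPF by
      rw [map_prod, map_prod]
      refine Finset.prod_congr rfl fun i _ => ?_
      rw [rename_X]
      rfl] at h0
    rw [h0]
    refine Finset.sum_congr rfl fun σ _ => ?_
    rw [A_rename_perm, rename_val_Kfin]
  -- Step B : the G σ transform correctly
  have hGren : ∀ σ : Perm (Fin n), renP ℂ n σ (G σ)
      = A (rename Fin.val (c σ)) * (A p₀ * vand ℂ n) := by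
    intro σ
    rw [hG]
    simp only
    rw [hg]
    simp only
    rw [← A_rename_perm]
    rw [show rename (⇑σ) (rename (⇑(σ⁻¹)) (c σ * p₁ * vfin ℂ n)) = c σ * p₁ * vfin ℂ n by
      rw [rename_rename, show (⇑σ ∘ ⇑(σ⁻¹)) = id from funext fun x => Equiv.apply_symm_apply σ x,
        rename_id, AlgHom.id_apply]]
    rw [map_mul, map_mul, map_mul, map_mul, hp₁, ← vand_eq]
    ring
  -- Step C : relation between W and p₀
  have hWrel : W * ZPF ^ N₁ = A p₀ * vand ℂ n := by
    rw [hW, hZPF, ← ZP_eq, ← map_pow, ← hfp]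
    ring
  have hWanti : ∀ σ : Perm (Fin n), renP ℂ n σ W = ((Perm.sign σ : ℤ) : RF ℂ) * W := by
    intro σ
    rw [hW, map_mul, show renP ℂ n σ f = f from hsym σ, renP_vand]
    ring
  -- Step D : decomposition of W
  have hsum : W = ∑ σ : Perm (Fin n), (ZPF ^ M)⁻¹ * renP ℂ n σ (G σ * KR) := by
    have hterm : ∀ σ : Perm (Fin n), (ZPF ^ M)⁻¹ * renP ℂ n σ (G σ * KR)
        = (ZPF ^ M)⁻¹ * (A p₀ * vand ℂ n) * (A (rename Fin.val (c σ)) * renP ℂ n σ KR) := by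
      intro σ
      rw [map_mul, hGren]
      ring
    simp only [hterm]
    rw [← Finset.mul_sum, ← hZPN, ← hWrel]
    rw [hM, pow_add]
    field_simp
  -- Step E : applying Alt
  have hAltW : W = ∑ σ : Perm (Fin n),
      (ZPF ^ M)⁻¹ * (((Perm.sign σ : ℤ) : RF ℂ) * Alt ℂ n (G σ * KR)) := by
    conv_lhs => rw [← Alt_antisym ℂ n W hWanti, hsum]
    rw [Alt_sum]
    refine Finset.sum_congr rfl fun σ _ => ?_
    rw [Alt_mul_left ℂ n _ _ (fun τ => renP_ZPpow_inv n M τ), Alt_renP]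
  -- Step F : expanding G σ into monomials
  have hmon : ∀ (d : Fin n →₀ ℕ) (a : ℂ), A (rename Fin.val (monomial d a))
      = cst ℂ a * ∏ i : Fin n, Z ℂ (i : ℕ) ^ (d i) := by
    intro d a
    rw [monomial_eq, Finsupp.prod_fintype _ _ (fun i => pow_zero _)]
    rw [map_mul, rename_C, map_prod]
    simp only [map_pow, rename_X]
    rw [map_mul, map_prod]
    simp only [map_pow]
    rfl
  have hGexp : ∀ σ : Perm (Fin n), Alt ℂ n (G σ * KR)
      = ∑ d ∈ (g σ).support, cst ℂ (coeff d (g σ)) *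
          Alt ℂ n ((∏ i : Fin n, Z ℂ (i : ℕ) ^ (d i : ℕ)) * KR) := by
    intro σ
    have h1 : G σ = ∑ d ∈ (g σ).support, cst ℂ (coeff d (g σ)) *
        ∏ i : Fin n, Z ℂ (i : ℕ) ^ (d i : ℕ) := by
      rw [hG]
      simp only
      conv_lhs => rw [as_sum (g σ)]
      rw [map_sum, map_sum]
      exact Finset.sum_congr rfl fun d _ => hmon d _
    rw [h1, Finset.sum_mul, Alt_sum]
    refine Finset.sum_congr rfl fun d _ => ?_
    rw [show cst ℂ (coeff d (g σ)) * (∏ i : Fin n, Z ℂ (i : ℕ) ^ (d i : ℕ)) * KR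
      = cst ℂ (coeff d (g σ)) * ((∏ i : Fin n, Z ℂ (i : ℕ) ^ (d i : ℕ)) * KR) from by ring]
    rw [Alt_mul_left ℂ n _ _ (fun τ => by unfold renP; rw [ren_cst])]
  -- Step G : each term is a shuffle product
  have hshuf : ∀ d : Fin n →₀ ℕ, (ZPF ^ M)⁻¹ *
      Alt ℂ n ((∏ i : Fin n, Z ℂ (i : ℕ) ^ (d i : ℕ)) * KR)
      = (vand ℂ n) ^ 2 * iterSh ℂ q₁ q₂ (List.ofFn fun i => Z ℂ 0 ^ ((d i : ℤ) - M)) := by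
    intro d
    rw [iterSh_zpowList]
    rw [show (ZPF ^ M)⁻¹ * Alt ℂ n ((∏ i : Fin n, Z ℂ (i : ℕ) ^ (d i : ℕ)) * KR)
        = Alt ℂ n ((ZPF ^ M)⁻¹ * ((∏ i : Fin n, Z ℂ (i : ℕ) ^ (d i : ℕ)) * KR)) from
      (Alt_mul_left ℂ n _ _ (fun τ => renP_ZPpow_inv n M τ)).symm]
    rw [show (ZPF ^ M)⁻¹ * ((∏ i : Fin n, Z ℂ (i : ℕ) ^ (d i : ℕ)) * KR)
        = ((ZPF ^ M)⁻¹ * (∏ i : Fin n, Z ℂ (i : ℕ) ^ (d i : ℕ))) * KR from by ring]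
    rw [hZPF, absorb n M (fun i => d i)]
    rw [← mul_assoc]
    rw [mul_inv_cancel₀ (pow_ne_zero 2 (vand_ne_zero ℂ n)), one_mul]
  -- Step H : final assembly
  have hFW : F = W * ((vand ℂ n) ^ 2)⁻¹ := by
    rw [hFe, hW, div_eq_mul_inv, mul_assoc]
    congr 1
    rw [sq, mul_inv, ← mul_assoc, mul_inv_cancel₀ (vand_ne_zero ℂ n), one_mul]
  refine ⟨Finset.univ.sigma (fun σ : Perm (Fin n) => (g σ).support),
    fun x => ((Perm.sign x.1 : ℤ) : ℂ) * coeff x.2 (g x.1), M, ?_⟩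
  rw [Finset.sum_sigma]
  rw [hFW, hAltW, Finset.sum_mul]
  refine Finset.sum_congr rfl fun σ _ => ?_
  rw [hGexp, Finset.mul_sum, Finset.mul_sum, Finset.sum_mul]
  refine Finset.sum_congr rfl fun d _ => ?_
  have hres : cst ℂ (((Perm.sign σ : ℤ) : ℂ) * coeff d (g σ))
      = ((Perm.sign σ : ℤ) : RF ℂ) * cst ℂ (coeff d (g σ)) := by
    rw [cst_mul, intCast_eq_cst]
  rw [hres]
  have hcomm : (ZPF ^ M)⁻¹ * (((Perm.sign σ : ℤ) : RF ℂ) *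
      (cst ℂ (coeff d (g σ)) * Alt ℂ n ((∏ i : Fin n, Z ℂ (i : ℕ) ^ (d i : ℕ)) * KR))) *
        ((vand ℂ n) ^ 2)⁻¹
      = ((Perm.sign σ : ℤ) : RF ℂ) * cst ℂ (coeff d (g σ)) *
        (((ZPF ^ M)⁻¹ * Alt ℂ n ((∏ i : Fin n, Z ℂ (i : ℕ) ^ (d i : ℕ)) * KR)) *
          ((vand ℂ n) ^ 2)⁻¹) := by ring
  rw [hcomm, hshuf]
  rw [show (vand ℂ n) ^ 2 * iterSh ℂ q₁ q₂ (List.ofFn fun i => Z ℂ 0 ^ ((d i : ℤ) - M)) *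
      ((vand ℂ n) ^ 2)⁻¹ = iterSh ℂ q₁ q₂ (List.ofFn fun i => Z ℂ 0 ^ ((d i : ℤ) - M)) from by
    rw [mul_comm ((vand ℂ n) ^ 2) (iterSh ℂ q₁ q₂ (List.ofFn fun i => Z ℂ 0 ^ ((d i : ℤ) - M))),
      mul_assoc, mul_inv_cancel₀ (pow_ne_zero 2 (vand_ne_zero ℂ n)), mul_one]]

end Aux7b

/-- for generic `q₁, q₂ ∈ ℂ*`, the shuffle algebra is generated in degree
one: every element of `S_n` is a `ℂ`-linear combination of iterated shuffle products of
one-variable Laurent polynomials. -/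
theorem generated_in_degree_one (q₁ q₂ : ℂ) (hq₁ : q₁ ≠ 0) (hq₂ : q₂ ≠ 0)
    (hgen : ∀ a b : ℕ, (a, b) ≠ (0, 0) → q₁ ^ a * q₂ ^ b ≠ 1)
    (n : ℕ) (hn : 1 ≤ n) (F : RF ℂ) (hF : F ∈ Sgr ℂ n) :
    ∃ (t : Finset (List (RF ℂ))) (c : List (RF ℂ) → ℂ),
      (∀ l ∈ t, l.length = n ∧ ∀ f ∈ l, IsSymLaurent ℂ 1 f) ∧
      F = ∑ l ∈ t, cst ℂ (c l) * iterSh ℂ q₁ q₂ l := by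
  classical
  obtain ⟨s, γ, M, hFs⟩ := main_span q₁ q₂ hq₁ hq₂ hgen n F hF
  refine ⟨s.image (fun x => List.ofFn fun i => Z ℂ 0 ^ ((x.2 i : ℤ) - M)),
    fun l => ∑ x ∈ s.filter
      (fun y => (List.ofFn fun i => Z ℂ 0 ^ ((y.2 i : ℤ) - M)) = l), γ x, ?_, ?_⟩
  · intro l hl
    obtain ⟨x, hx, rfl⟩ := Finset.mem_image.mp hl
    refine ⟨List.length_ofFn, ?_⟩
    intro f hf
    obtain ⟨i, hfi⟩ := List.mem_ofFn.mp hf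
    rw [← hfi]
    exact isSymLaurent_zpow _
  · rw [hFs]
    refine (Finset.sum_image'
      (fun x => cst ℂ (γ x) * iterSh ℂ q₁ q₂ (List.ofFn fun i => Z ℂ 0 ^ ((x.2 i : ℤ) - M)))
      ?_).symm
    intro x hx
    rw [cst_sum, Finset.sum_mul]
    refine Finset.sum_congr rfl fun y hy => ?_
    rw [← (Finset.mem_filter.mp hy).2]
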